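/- arXiv:2510.01541 — 3 statements merged into one kernel-verified Lean document; each statement's English description precedes it below -/
import Mathlib

section
/- Distance-with-varying-speed bound (segmentation lemma, two segments): suppose a continuously differentiable function h : [0, T] → ℝ starts at h(0) = 2Δ with Δ > 0, and satisfies h'(t) ≥ ρ₂ whenever h(t) ∈ [Δ, 2Δ] and h'(t) ≥ ρ₁ whenever h(t) ∈ [0, Δ], where ρ₁ ≤ ρ₂ < 0. If T ≤ -Δ/ρ₂ - Δ/ρ₁, then h(t) ≥ 0 for all t ∈ [0, T]. -/
open Set in
theorem two_segment_safety
    (Δ ρ₁ ρ₂ T : ℝ) (hΔ : 0 < Δ)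
    (h12 : ρ₁ ≤ ρ₂) (hρ₂ : ρ₂ < 0)
    (hT0 : 0 ≤ T) (hT : T ≤ -Δ / ρ₂ - Δ / ρ₁)
    (h h' : ℝ → ℝ)
    (hderiv : ∀ t ∈ Icc (0 : ℝ) T, HasDerivAt h (h' t) t)
    (hcont : ContinuousOn h' (Icc (0 : ℝ) T))
    (hinit : h 0 = 2 * Δ)
    (hseg2 : ∀ t ∈ Icc (0 : ℝ) T, Δ ≤ h t → h t ≤ 2 * Δ → h' t ≥ ρ₂)
    (hseg1 : ∀ t ∈ Icc (0 : ℝ) T, 0 ≤ h t → h t ≤ Δ → h' t ≥ ρ₁) :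
    ∀ t ∈ Icc (0 : ℝ) T, h t ≥ 0 := by
  have hρ₁ : ρ₁ < 0 := lt_of_le_of_lt h12 hρ₂
  by_contra hcon
  push_neg at hcon
  obtain ⟨t₂, ht₂mem, ht₂⟩ := hcon
  obtain ⟨ht₂0, ht₂T⟩ := ht₂mem
  have hc : ContinuousOn h (Icc (0 : ℝ) T) := fun t ht =>
    (hderiv t ht).continuousAt.continuousWithinAt
  -- generic fact: level sets inside subintervals are compact
  have key : ∀ a b c : ℝ, 0 ≤ a → b ≤ T →
      IsCompact {t : ℝ | t ∈ Icc a b ∧ h t = c} := by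
    intro a b c ha hb
    have hsub : Icc a b ⊆ Icc 0 T := Icc_subset_Icc ha hb
    have hcl : IsClosed (Icc a b ∩ h ⁻¹' {c}) :=
      (hc.mono hsub).preimage_isClosed_of_isClosed isClosed_Icc isClosed_singleton
    exact (isCompact_Icc (a := a) (b := b)).of_isClosed_subset hcl inter_subset_left
  -- t₁ : last time ≤ t₂ with h = 2Δ
  set S₂ : Set ℝ := {t : ℝ | t ∈ Icc 0 t₂ ∧ h t = 2 * Δ} with hS₂def
  have hS₂ne : S₂.Nonempty := ⟨0, ⟨le_refl 0, ht₂0⟩, hinit⟩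
  have hS₂comp : IsCompact S₂ := key 0 t₂ (2 * Δ) le_rfl ht₂T
  set t₁ := sSup S₂ with ht₁def
  have ht₁mem : t₁ ∈ S₂ := hS₂comp.sSup_mem hS₂ne
  have ht₁0 : 0 ≤ t₁ := ht₁mem.1.1
  have ht₁t₂ : t₁ ≤ t₂ := ht₁mem.1.2
  have ht₁v : h t₁ = 2 * Δ := ht₁mem.2
  -- h ≤ 2Δ on [t₁, t₂]
  have hub : ∀ x ∈ Icc t₁ t₂, h x ≤ 2 * Δ := by
    intro x hx
    by_contra hgt
    push_neg at hgt
    have hxt₂ : x ≤ t₂ := hx.2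
    have : (2 * Δ) ∈ Icc (h t₂) (h x) := ⟨by nlinarith, le_of_lt hgt⟩
    obtain ⟨y, hy, hyv⟩ := intermediate_value_Icc' hxt₂
      (hc.mono (Icc_subset_Icc (le_trans ht₁0 hx.1) ht₂T)) this
    have hyS : y ∈ S₂ := ⟨⟨le_trans (le_trans ht₁0 hx.1) hy.1, hy.2⟩, hyv⟩
    have : y ≤ t₁ := le_csSup hS₂comp.bddAbove hyS
    have hxt₁ : x ≤ t₁ := le_trans hy.1 this
    have : h x ≤ 2 * Δ := by
      have : x = t₁ := le_antisymm hxt₁ hx.1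
      rw [this, ht₁v]
    linarith
  -- t₀ : first time in [t₁, t₂] with h = 0
  set S₀ : Set ℝ := {t : ℝ | t ∈ Icc t₁ t₂ ∧ h t = 0} with hS₀def
  have hS₀ne : S₀.Nonempty := by
    have : (0 : ℝ) ∈ Icc (h t₂) (h t₁) := ⟨le_of_lt ht₂, by rw [ht₁v]; nlinarith⟩
    obtain ⟨y, hy, hyv⟩ := intermediate_value_Icc' ht₁t₂
      (hc.mono (Icc_subset_Icc ht₁0 ht₂T)) this
    exact ⟨y, hy, hyv⟩
  have hS₀comp : IsCompact S₀ := key t₁ t₂ 0 ht₁0 ht₂T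
  set t₀ := sInf S₀ with ht₀def
  have ht₀mem : t₀ ∈ S₀ := hS₀comp.sInf_mem hS₀ne
  have ht₀1 : t₁ ≤ t₀ := ht₀mem.1.1
  have ht₀2 : t₀ ≤ t₂ := ht₀mem.1.2
  have ht₀v : h t₀ = 0 := ht₀mem.2
  have ht₀lt : t₀ < t₂ := lt_of_le_of_ne ht₀2 (fun he => by rw [he] at ht₀v; linarith)
  -- h > 0 on [t₁, t₀)
  have hpos : ∀ x ∈ Ico t₁ t₀, 0 < h x := by
    intro x hx
    by_contra hle
    push_neg at hle
    have : (0 : ℝ) ∈ Icc (h x) (h t₁) := ⟨hle, by rw [ht₁v]; nlinarith⟩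
    obtain ⟨y, hy, hyv⟩ := intermediate_value_Icc' hx.1
      (hc.mono (Icc_subset_Icc ht₁0 (le_trans (le_of_lt (lt_of_lt_of_le hx.2 ht₀2)) ht₂T))) this
    have hyS : y ∈ S₀ := ⟨⟨hy.1, le_trans hy.2 (le_of_lt (lt_of_lt_of_le hx.2 ht₀2))⟩, hyv⟩
    have : t₀ ≤ y := csInf_le hS₀comp.bddBelow hyS
    have : t₀ ≤ x := le_trans this hy.2
    exact absurd hx.2 (not_lt.2 this)
  -- S_Δ : times in [t₁, t₀] with h = Δ
  set SΔ : Set ℝ := {t : ℝ | t ∈ Icc t₁ t₀ ∧ h t = Δ} with hSΔdef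
  have hSΔne : SΔ.Nonempty := by
    have : Δ ∈ Icc (h t₀) (h t₁) := ⟨by rw [ht₀v]; linarith, by rw [ht₁v]; linarith⟩
    obtain ⟨y, hy, hyv⟩ := intermediate_value_Icc' ht₀1
      (hc.mono (Icc_subset_Icc ht₁0 (le_trans ht₀2 ht₂T))) this
    exact ⟨y, hy, hyv⟩
  have hSΔcomp : IsCompact SΔ := key t₁ t₀ Δ ht₁0 (le_trans ht₀2 ht₂T)
  set tf := sInf SΔ with htfdef
  set tm := sSup SΔ with htmdef
  have htfmem : tf ∈ SΔ := hSΔcomp.sInf_mem hSΔne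
  have htmmem : tm ∈ SΔ := hSΔcomp.sSup_mem hSΔne
  have htfm : tf ≤ tm := csInf_le_csSup hSΔne hSΔcomp.bddBelow hSΔcomp.bddAbove
  have htf1 : t₁ ≤ tf := htfmem.1.1
  have htf0 : tf ≤ t₀ := htfmem.1.2
  have htm1 : t₁ ≤ tm := htmmem.1.1
  have htm0 : tm ≤ t₀ := htmmem.1.2
  have htfv : h tf = Δ := htfmem.2
  have htmv : h tm = Δ := htmmem.2
  -- h ≥ Δ on [t₁, tf]
  have hlo2 : ∀ x ∈ Icc t₁ tf, Δ ≤ h x := by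
    intro x hx
    by_contra hlt
    push_neg at hlt
    have : Δ ∈ Icc (h x) (h t₁) := ⟨le_of_lt hlt, by rw [ht₁v]; linarith⟩
    obtain ⟨y, hy, hyv⟩ := intermediate_value_Icc' hx.1
      (hc.mono (Icc_subset_Icc ht₁0 (le_trans (le_trans hx.2 htf0) (le_trans ht₀2 ht₂T)))) this
    have hyS : y ∈ SΔ := ⟨⟨hy.1, le_trans hy.2 (le_trans hx.2 htf0)⟩, hyv⟩
    have : tf ≤ y := csInf_le hSΔcomp.bddBelow hyS
    have hxtf : tf ≤ x := le_trans this hy.2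
    have : x = tf := le_antisymm hx.2 hxtf
    rw [this, htfv] at hlt; linarith
  -- h ≤ Δ on [tm, t₀]
  have hhi1 : ∀ x ∈ Icc tm t₀, h x ≤ Δ := by
    intro x hx
    by_contra hgt
    push_neg at hgt
    have : Δ ∈ Icc (h t₀) (h x) := ⟨by rw [ht₀v]; linarith, le_of_lt hgt⟩
    obtain ⟨y, hy, hyv⟩ := intermediate_value_Icc' hx.2
      (hc.mono (Icc_subset_Icc (le_trans ht₁0 (le_trans htm1 hx.1)) (le_trans ht₀2 ht₂T))) this
    have hyS : y ∈ SΔ := ⟨⟨le_trans htm1 (le_trans hx.1 hy.1), hy.2⟩, hyv⟩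
    have : y ≤ tm := le_csSup hSΔcomp.bddAbove hyS
    have hxtm : x ≤ tm := le_trans hy.1 this
    have : x = tm := le_antisymm hxtm hx.1
    rw [this, htmv] at hgt; linarith
  -- Mean value on [t₁, tf] with slope ρ₂
  have hsub1 : Icc t₁ tf ⊆ Icc (0 : ℝ) T :=
    Icc_subset_Icc ht₁0 (le_trans htf0 (le_trans ht₀2 ht₂T))
  have hmv2 : ρ₂ * (tf - t₁) ≤ h tf - h t₁ := by
    have hdiff : DifferentiableOn ℝ h (interior (Icc t₁ tf)) := by
      intro x hx
      rw [interior_Icc] at hx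
      exact ((hderiv x (hsub1 (Ioo_subset_Icc_self hx))).differentiableAt).differentiableWithinAt
    apply Convex.mul_sub_le_image_sub_of_le_deriv (convex_Icc t₁ tf) (hc.mono hsub1) hdiff
    · intro x hx
      rw [interior_Icc] at hx
      have hxmem : x ∈ Icc (0 : ℝ) T := hsub1 (Ioo_subset_Icc_self hx)
      rw [(hderiv x hxmem).deriv]
      exact hseg2 x hxmem (hlo2 x (Ioo_subset_Icc_self hx))
        (hub x ⟨le_of_lt hx.1, le_trans (le_of_lt hx.2) (le_trans htf0 ht₀2)⟩)
    · exact left_mem_Icc.2 (le_trans htf1 le_rfl)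
    · exact right_mem_Icc.2 htf1
    · exact htf1
  -- Mean value on [tm, t₀] with slope ρ₁
  have hsub2 : Icc tm t₀ ⊆ Icc (0 : ℝ) T :=
    Icc_subset_Icc (le_trans ht₁0 htm1) (le_trans ht₀2 ht₂T)
  have hmv1 : ρ₁ * (t₀ - tm) ≤ h t₀ - h tm := by
    have hdiff : DifferentiableOn ℝ h (interior (Icc tm t₀)) := by
      intro x hx
      rw [interior_Icc] at hx
      exact ((hderiv x (hsub2 (Ioo_subset_Icc_self hx))).differentiableAt).differentiableWithinAt
    apply Convex.mul_sub_le_image_sub_of_le_deriv (convex_Icc tm t₀) (hc.mono hsub2) hdiff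
    · intro x hx
      rw [interior_Icc] at hx
      have hxmem : x ∈ Icc (0 : ℝ) T := hsub2 (Ioo_subset_Icc_self hx)
      rw [(hderiv x hxmem).deriv]
      exact hseg1 x hxmem (le_of_lt (hpos x ⟨le_trans htm1 (le_of_lt hx.1), hx.2⟩))
        (hhi1 x (Ioo_subset_Icc_self hx))
    · exact left_mem_Icc.2 htm0
    · exact right_mem_Icc.2 htm0
    · exact htm0
  rw [htfv, ht₁v] at hmv2
  rw [ht₀v, htmv] at hmv1
  -- ρ₂ (tf - t₁) ≤ -Δ  ⇒ tf - t₁ ≥ -Δ/ρ₂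
  have h1 : -Δ / ρ₂ ≤ tf - t₁ := by
    rw [div_le_iff_of_neg hρ₂]
    nlinarith
  have h2 : -Δ / ρ₁ ≤ t₀ - tm := by
    rw [div_le_iff_of_neg hρ₁]
    nlinarith
  rw [neg_div] at h1 h2
  rw [neg_div] at hT
  linarith
end

section
/- Additivity of safety degradation bounds over multiple compromised subsystems with arbitrary overlaps: let h be continuously differentiable on [t₀, t_f] with h(t₀) ≥ c, and suppose ḣ(t) = b(t) + Σ_{i=1}^N a_i(t), where b(t) ≥ 0 whenever h(t) ≤ c, a_i(t) ≥ ρ_i (with ρ_i ≤ 0) for t in some interval I_i ⊆ [t₀,t_f] of length at most T_i, and a_i(t) = 0 outside I_i. If c + Σ_i ρ_i T_i ≥ 0, then h(t) ≥ 0 for all t ∈ [t₀, t_f]. -/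
set_option maxHeartbeats 1000000

open Set in
theorem additive_degradation_overlapping
    (N : ℕ) (hN : 1 ≤ N) (c t₀ tf : ℝ) (hc : 0 < c) (ht : t₀ < tf)
    (ρ T s e : Fin N → ℝ)
    (hρ : ∀ i, ρ i ≤ 0) (hT : ∀ i, 0 ≤ T i)
    (hse : ∀ i, s i ≤ e i) (hs : ∀ i, t₀ ≤ s i) (he : ∀ i, e i ≤ tf)
    (hlen : ∀ i, e i - s i ≤ T i)
    (h h' b : ℝ → ℝ) (a : Fin N → ℝ → ℝ)
    (hderiv : ∀ t ∈ Icc t₀ tf, HasDerivAt h (h' t) t)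
    (hcont : ContinuousOn h' (Icc t₀ tf))
    (hbint : IntervalIntegrable b MeasureTheory.volume t₀ tf)
    (haint : ∀ i, IntervalIntegrable (a i) MeasureTheory.volume t₀ tf)
    (hdecomp : ∀ t ∈ Icc t₀ tf, h' t = b t + ∑ i, a i t)
    (hb : ∀ t ∈ Icc t₀ tf, h t ≤ c → b t ≥ 0)
    (ha_in : ∀ i, ∀ t ∈ Icc (s i) (e i), a i t ≥ ρ i)
    (ha_out : ∀ i, ∀ t ∈ Icc t₀ tf, t ∉ Icc (s i) (e i) → a i t = 0)
    (hinit : h t₀ ≥ c)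
    (hsafe : c + ∑ i, ρ i * T i ≥ 0) :
    ∀ t ∈ Icc t₀ tf, h t ≥ 0 := by
  intro t htmem
  by_contra hneg
  push_neg at hneg
  obtain ⟨ht0t, httf⟩ := htmem
  -- h is continuous at each point of [t₀, tf]
  have hcontAt : ∀ x ∈ Icc t₀ tf, ContinuousAt h x := fun x hx => (hderiv x hx).continuousAt
  set S : Set ℝ := {τ | τ ∈ Icc t₀ t ∧ c ≤ h τ} with hSdef
  have hSne : S.Nonempty := ⟨t₀, ⟨le_refl _, ht0t⟩, hinit⟩
  have hSbdd : BddAbove S := ⟨t, fun x hx => hx.1.2⟩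
  set t1 := sSup S with ht1def
  have ht1le : t1 ≤ t := csSup_le hSne (fun x hx => hx.1.2)
  have ht1ge : t₀ ≤ t1 := le_csSup hSbdd ⟨⟨le_refl _, ht0t⟩, hinit⟩
  have ht1Icc : t1 ∈ Icc t₀ tf := ⟨ht1ge, le_trans ht1le httf⟩
  -- c ≤ h t1
  have hct1 : c ≤ h t1 := by
    by_contra hlt
    push_neg at hlt
    have hev : ∀ᶠ x in nhds t1, h x < c :=
      (hcontAt t1 ht1Icc).eventually_lt continuousAt_const hlt
    rw [Metric.eventually_nhds_iff] at hev
    obtain ⟨ε, hε, hball⟩ := hev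
    obtain ⟨x, hxS, hx⟩ := exists_lt_of_lt_csSup hSne (by linarith : t1 - ε < t1)
    have hxle : x ≤ t1 := le_csSup hSbdd hxS
    have : h x < c := hball (by rw [Real.dist_eq]; rw [abs_lt]; constructor <;> linarith)
    exact absurd hxS.2 (not_le.2 this)
  have ht1lt : t1 < t := by
    rcases lt_or_eq_of_le ht1le with h1 | h1
    · exact h1
    · exact absurd hct1 (by rw [h1]; linarith)
  -- h t1 ≤ c (otherwise points just after t1 are in S)
  have hht1le : h t1 ≤ c := by
    by_contra hgt
    push_neg at hgt
    have hev : ∀ᶠ x in nhds t1, c < h x :=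
      continuousAt_const.eventually_lt (hcontAt t1 ht1Icc) hgt
    rw [Metric.eventually_nhds_iff] at hev
    obtain ⟨ε, hε, hball⟩ := hev
    set x := min (t1 + ε / 2) ((t1 + t) / 2) with hxdef
    have hx1 : t1 < x := by apply lt_min <;> linarith
    have hx2 : x ≤ t := le_trans (min_le_right _ _) (by linarith)
    have hx3 : dist x t1 < ε := by
      rw [Real.dist_eq, abs_lt]
      constructor
      · linarith
      · have := min_le_left (t1 + ε / 2) ((t1 + t) / 2)
        simp only [← hxdef] at this; linarith
    have hxS : x ∈ S := ⟨⟨le_trans ht1ge hx1.le, hx2⟩, (hball hx3).le⟩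
    exact absurd (le_csSup hSbdd hxS) (not_le.2 hx1)
  -- on [t1, t], h ≤ c
  have hhle : ∀ τ ∈ Icc t1 t, h τ ≤ c := by
    intro τ hτ
    rcases eq_or_lt_of_le hτ.1 with h1 | h1
    · rw [← h1]; exact hht1le
    · by_contra hgt
      push_neg at hgt
      have : τ ∈ S := ⟨⟨le_trans ht1ge hτ.1, hτ.2⟩, hgt.le⟩
      exact absurd (le_csSup hSbdd this) (not_le.2 h1)
  have hsub : Icc t1 t ⊆ Icc t₀ tf := Icc_subset_Icc ht1ge httf
  have huIcc : uIcc t1 t = Icc t1 t := uIcc_of_le ht1le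
  have husub : uIcc t1 t ⊆ uIcc t₀ tf := by
    rw [huIcc, uIcc_of_le ht.le]; exact hsub
  -- FTC
  have hint_h' : IntervalIntegrable h' MeasureTheory.volume t1 t := by
    apply ContinuousOn.intervalIntegrable
    rw [huIcc]; exact hcont.mono hsub
  have hFTC : ∫ τ in t1..t, h' τ = h t - h t1 := by
    apply intervalIntegral.integral_eq_sub_of_hasDerivAt
    · intro x hx; exact hderiv x (hsub (huIcc ▸ hx))
    · exact hint_h'
  -- integrabilities
  have hbint' : IntervalIntegrable b MeasureTheory.volume t1 t := hbint.mono_set husub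
  have haint' : ∀ i, IntervalIntegrable (a i) MeasureTheory.volume t1 t :=
    fun i => (haint i).mono_set husub
  have hsumint : IntervalIntegrable (fun τ => ∑ i, a i τ) MeasureTheory.volume t1 t := by
    have h1 : IntervalIntegrable (∑ i : Fin N, a i) MeasureTheory.volume t1 t :=
      IntervalIntegrable.sum Finset.univ (fun i _ => haint' i)
    have h2 : (∑ i : Fin N, a i) = (fun τ => ∑ i, a i τ) := by
      funext τ; simp [Finset.sum_apply]
    rwa [h2] at h1
  -- rewrite integral via decomposition
  have hEq : ∫ τ in t1..t, h' τ = (∫ τ in t1..t, b τ) + ∫ τ in t1..t, ∑ i, a i τ := by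
    rw [show (∫ τ in t1..t, h' τ) = ∫ τ in t1..t, (b τ + ∑ i, a i τ) from
      intervalIntegral.integral_congr (fun x hx => hdecomp x (hsub (huIcc ▸ hx)))]
    exact intervalIntegral.integral_add hbint' hsumint
  have hbpos : 0 ≤ ∫ τ in t1..t, b τ := by
    apply intervalIntegral.integral_nonneg ht1le
    intro u hu
    exact hb u (hsub hu) (hhle u hu)
  -- per-i bound
  have hai : ∀ i, ρ i * T i ≤ ∫ τ in t1..t, a i τ := by
    intro i
    set g : ℝ → ℝ := (Icc (s i) (e i)).indicator (fun _ => ρ i) with hgdef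
    have hgint : IntervalIntegrable g MeasureTheory.volume t1 t := by
      rw [intervalIntegrable_iff_integrableOn_Ioc_of_le ht1le]
      exact (MeasureTheory.integrableOn_const measure_Ioc_lt_top.ne).indicator
        measurableSet_Icc
    have hmono : ∀ x ∈ Icc t1 t, g x ≤ a i x := by
      intro x hx
      by_cases hxi : x ∈ Icc (s i) (e i)
      · rw [hgdef, indicator_of_mem hxi]; exact ha_in i x hxi
      · rw [hgdef, indicator_of_notMem hxi, ha_out i x (hsub hx) hxi]
    have h1 : (∫ τ in t1..t, g τ) ≤ ∫ τ in t1..t, a i τ :=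
      intervalIntegral.integral_mono_on ht1le hgint (haint' i) hmono
    have h2 : (∫ τ in t1..t, g τ) =
        ρ i * (MeasureTheory.volume (Ioc t1 t ∩ Icc (s i) (e i))).toReal := by
      rw [intervalIntegral.integral_of_le ht1le, hgdef,
        MeasureTheory.setIntegral_indicator measurableSet_Icc,
        MeasureTheory.setIntegral_const]
      rw [smul_eq_mul, mul_comm]; rfl
    have h3 : (MeasureTheory.volume (Ioc t1 t ∩ Icc (s i) (e i))).toReal ≤ T i := by
      have hm : MeasureTheory.volume (Ioc t1 t ∩ Icc (s i) (e i)) ≤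
          MeasureTheory.volume (Icc (s i) (e i)) :=
        MeasureTheory.measure_mono inter_subset_right
      rw [Real.volume_Icc] at hm
      calc (MeasureTheory.volume (Ioc t1 t ∩ Icc (s i) (e i))).toReal
          ≤ (ENNReal.ofReal (e i - s i)).toReal :=
            ENNReal.toReal_mono ENNReal.ofReal_ne_top hm
        _ = e i - s i := ENNReal.toReal_ofReal (by linarith [hse i])
        _ ≤ T i := hlen i
    have h4 : ρ i * T i ≤ ρ i * (MeasureTheory.volume (Ioc t1 t ∩ Icc (s i) (e i))).toReal :=
      mul_le_mul_of_nonpos_left h3 (hρ i)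
    linarith [h1, h4, h2.symm.le]
  have hsum : (∑ i, ρ i * T i) ≤ ∫ τ in t1..t, ∑ i, a i τ := by
    rw [intervalIntegral.integral_finset_sum (fun i _ => haint' i)]
    exact Finset.sum_le_sum (fun i _ => hai i)
  have : h t - h t1 ≥ ∑ i, ρ i * T i := by
    rw [← hFTC, hEq]; linarith
  linarith
end

section
/- Safety across infinitely many attack cycles by induction: suppose there is a sequence of disjoint intervals [t_{0,k}, t_{f,k}] with t_{f,k} + τ ≤ t_{0,k+1}, and a continuously differentiable function h : [t₀, ∞) → ℝ such that (i) h(t_{0,1}) ≥ c, (ii) during each cycle, if h(t_{0,k}) ≥ c then h(t) ≥ 0 for all t ∈ [t_{0,k}, t_{f,k}] and h(t_{f,k}) ≥ 0, (iii) between cycles, ḣ(t) ≥ c/τ whenever h(t) < c, and h(t) ≥ c implies h stays ≥ c thereafter until the next cycle. Then h(t) ≥ 0 for all t ≥ t₀. -/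
open Set in
theorem safety_multiple_attack_cycles
    (c τ : ℝ) (hc : 0 < c) (hτ : 0 < τ)
    (t0 tf : ℕ → ℝ)
    (hcycle : ∀ k, t0 k < tf k)
    (hgap : ∀ k, tf k + τ ≤ t0 (k + 1))
    (h h' : ℝ → ℝ)
    (hderiv : ∀ t ∈ Ici (t0 0), HasDerivAt h (h' t) t)
    (hcont : ContinuousOn h' (Ici (t0 0)))
    (hinit : h (t0 0) ≥ c)
    (hcycle_safe : ∀ k, h (t0 k) ≥ c →
      (∀ t ∈ Icc (t0 k) (tf k), h t ≥ 0) ∧ h (tf k) ≥ 0)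
    (hbetween_deriv : ∀ k, ∀ t ∈ Icc (tf k) (t0 (k + 1)), h t < c → h' t ≥ c / τ)
    (hstay : ∀ k, ∀ s ∈ Icc (tf k) (t0 (k + 1)), ∀ t ∈ Icc (tf k) (t0 (k + 1)),
      s ≤ t → c ≤ h s → c ≤ h t)
    (hbetween_nonneg : ∀ k, h (tf k) ≥ 0 →
      ∀ t ∈ Icc (tf k) (t0 (k + 1)), h t ≥ 0) :
    ∀ t ∈ Ici (t0 0), h t ≥ 0 := by
  -- t0 is strictly increasing
  have ht0succ : ∀ k, t0 k < t0 (k + 1) := fun k =>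
    lt_of_lt_of_le (lt_of_lt_of_le (hcycle k) (by linarith [hgap k])) le_rfl
  have ht0mono : StrictMono t0 := strictMono_nat_of_lt_succ ht0succ
  have ht00 : ∀ k, t0 0 ≤ t0 k := fun k => ht0mono.monotone (Nat.zero_le k)
  have htf0 : ∀ k, t0 0 ≤ tf k := fun k => le_of_lt (lt_of_le_of_lt (ht00 k) (hcycle k))
  -- lower bound growth
  have hgrow : ∀ k, t0 0 + k * τ ≤ t0 k := by
    intro k
    induction k with
    | zero => simp
    | succ n ih =>
      have := hgap n
      have := hcycle n
      push_cast
      nlinarith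
  -- key induction: h (t0 k) ≥ c for all k
  have hkey : ∀ k, c ≤ h (t0 k) := by
    intro k
    induction k with
    | zero => exact hinit
    | succ n ih =>
      have htfn : h (tf n) ≥ 0 := (hcycle_safe n ih).2
      have hmem : t0 (n + 1) ∈ Icc (tf n) (t0 (n + 1)) :=
        ⟨by linarith [hgap n], le_rfl⟩
      by_cases hex : ∃ s ∈ Icc (tf n) (t0 (n + 1)), c ≤ h s
      · obtain ⟨s, hs, hcs⟩ := hex
        exact hstay n s hs (t0 (n + 1)) hmem hs.2 hcs
      · push_neg at hex
        -- h < c on the whole gap, so h' ≥ c/τ there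
        set g : ℝ → ℝ := fun t => c / τ * t - h t with hg
        have hsub : Icc (tf n) (t0 (n + 1)) ⊆ Ici (t0 0) := fun x hx =>
          le_trans (htf0 n) hx.1
        have hgd : ∀ x ∈ Icc (tf n) (t0 (n + 1)),
            HasDerivAt g (c / τ - h' x) x := by
          intro x hx
          have := ((hasDerivAt_id x).const_mul (c / τ)).sub (hderiv x (hsub hx))
          exact this.congr_deriv (by ring)
        have hanti : AntitoneOn g (Icc (tf n) (t0 (n + 1))) := by
          apply antitoneOn_of_deriv_nonpos (convex_Icc _ _)
          · intro x hx
            exact (hgd x hx).continuousAt.continuousWithinAt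
          · intro x hx
            rw [interior_Icc] at hx
            exact ((hgd x (Ioo_subset_Icc_self hx)).differentiableAt.differentiableWithinAt)
          · intro x hx
            rw [interior_Icc] at hx
            have hx' : x ∈ Icc (tf n) (t0 (n + 1)) := Ioo_subset_Icc_self hx
            rw [(hgd x hx').deriv]
            have := hbetween_deriv n x hx' (hex x hx')
            linarith
        have hle : g (t0 (n + 1)) ≤ g (tf n) :=
          hanti ⟨le_rfl, by linarith [hgap n]⟩ hmem (by linarith [hgap n])
        simp only [hg] at hle
        have hτc : c / τ * τ = c := div_mul_cancel₀ c (ne_of_gt hτ)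
        have hmul : c / τ * τ ≤ c / τ * (t0 (n + 1) - tf n) := by
          apply mul_le_mul_of_nonneg_left (by linarith [hgap n]) (by positivity)
        nlinarith
  -- coverage
  intro t ht
  have hP : ∃ k, t < t0 (k + 1) := by
    obtain ⟨n, hn⟩ := exists_nat_gt ((t - t0 0) / τ)
    refine ⟨n, ?_⟩
    have : (t - t0 0) < n * τ := by
      have := (div_lt_iff₀ hτ).mp hn
      linarith
    have := hgrow n
    have := ht0succ n
    linarith
  classical
  let k := Nat.find hP
  have hk2 : t < t0 (k + 1) := Nat.find_spec hP
  have hk1 : t0 k ≤ t := by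
    rcases Nat.eq_zero_or_pos k with h0 | hpos
    · rw [h0]; exact ht
    · have := Nat.find_min hP (m := k - 1) (by omega)
      push_neg at this
      have hk : k - 1 + 1 = k := Nat.succ_pred_eq_of_pos hpos
      rwa [hk] at this
  by_cases htf : t ≤ tf k
  · exact (hcycle_safe k (hkey k)).1 t ⟨hk1, htf⟩
  · push_neg at htf
    exact hbetween_nonneg k (hcycle_safe k (hkey k)).2 t ⟨le_of_lt htf, le_of_lt hk2⟩
end
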